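/- For all d ∈ ℕ and 0 ≤ k < d, there exists an infinite sequence {F_n} of families of axis-parallel boxes in ℝ^d such that: (1) no F_n can be pierced by finitely many axis-parallel k-flats; and (2) every sequence {B_n} with B_n ∈ F_n for all n contains two distinct boxes B_i, B_j that can both be intersected by a single axis-parallel k-flat. -/

import Mathlib

open Set

/-- An axis-parallel box in `ℝ^d`: a product of closed bounded intervals. -/
def IsBox {d : ℕ} (B : Set (Fin d → ℝ)) : Prop :=
  ∃ a b : Fin d → ℝ, (∀ i, a i ≤ b i) ∧ B = {x | ∀ i, x i ∈ Set.Icc (a i) (b i)}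

/-- An axis-parallel `k`-flat in `ℝ^d`: coordinates in a set `I` of size `d - k` are fixed. -/
def IsAxisFlat {d : ℕ} (k : ℕ) (K : Set (Fin d → ℝ)) : Prop :=
  ∃ (I : Finset (Fin d)) (c : Fin d → ℝ), I.card = d - k ∧ K = {x | ∀ i ∈ I, x i = c i}

/-- An axis-parallel hyperplane in `ℝ^d`. -/
def IsAxisHyperplane {d : ℕ} (H : Set (Fin d → ℝ)) : Prop :=
  ∃ (i : Fin d) (c : ℝ), H = {x | x i = c}

/-- `F` is pierceable by finitely many axis-parallel `k`-flats. -/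
def PiercedByFlats {d : ℕ} (k : ℕ) (F : Set (Set (Fin d → ℝ))) : Prop :=
  ∃ K : Finset (Set (Fin d → ℝ)), (∀ f ∈ K, IsAxisFlat k f) ∧
    ∀ B ∈ F, ∃ f ∈ K, (B ∩ f).Nonempty

/-- `F` is pierceable by finitely many axis-parallel hyperplanes. -/
def PiercedByHyperplanes {d : ℕ} (F : Set (Set (Fin d → ℝ))) : Prop :=
  ∃ H : Finset (Set (Fin d → ℝ)), (∀ h ∈ H, IsAxisHyperplane h) ∧
    ∀ B ∈ F, ∃ h ∈ H, (B ∩ h).Nonempty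

theorem stmt15 (d k : ℕ) (hk : k < d) :
    ∃ F : ℕ → Set (Set (Fin d → ℝ)),
      (∀ n, ∀ B ∈ F n, IsBox B) ∧
      (∀ n, ¬ PiercedByFlats k (F n)) ∧
      (∀ B : ℕ → Set (Fin d → ℝ), (∀ n, B n ∈ F n) →
        ∃ i j : ℕ, i ≠ j ∧ ∃ K, IsAxisFlat k K ∧
          (K ∩ B i).Nonempty ∧ (K ∩ B j).Nonempty) := by
  have hd : 0 < d := (Nat.zero_le k).trans_lt hk
  obtain ⟨e, he⟩ := exists_surjective_nat (Fin d → ℚ)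
  set q : ℕ → Fin d → ℝ := fun n i => (e n i : ℝ) with hq
  set c : ℕ → ℕ → ℝ := fun n m => (1/2 : ℝ) ^ (n + 2*m) with hc
  set Box : ℕ → ℕ → Set (Fin d → ℝ) :=
    fun n m => {x | ∀ i, x i ∈ Icc (q n i - c n m) (q n i - c n m / 2)} with hBox
  have hcpos : ∀ n m, 0 < c n m := fun n m => pow_pos (by norm_num) _
  have hcmono : ∀ n m m', m < m' → c n m' ≤ c n m / 4 := by
    intro n m m' h
    have h1 : (1/2:ℝ)^(n+2*m') ≤ (1/2:ℝ)^(n+2*m+2) :=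
      pow_le_pow_of_le_one (by norm_num) (by norm_num) (by omega)
    have h2 : (1/2:ℝ)^(n+2*m+2) = c n m / 4 := by
      rw [hc, pow_add]; norm_num; ring
    calc c n m' = (1/2:ℝ)^(n+2*m') := rfl
      _ ≤ (1/2:ℝ)^(n+2*m+2) := h1
      _ = c n m / 4 := h2
  have hcorner : ∀ n m, (fun i => q n i - c n m) ∈ Box n m := by
    intro n m i
    have := hcpos n m
    constructor <;> simp <;> linarith
  refine ⟨fun n => Set.range (Box n), ?_, ?_, ?_⟩
  · rintro n B ⟨m, rfl⟩
    refine ⟨fun i => q n i - c n m, fun i => q n i - c n m / 2, fun i => ?_, rfl⟩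
    have := hcpos n m
    linarith
  · rintro n ⟨K, hKflat, hKp⟩
    have hchoice : ∀ m : ℕ, ∃ f, f ∈ K ∧ ((Box n m) ∩ f).Nonempty := by
      intro m
      obtain ⟨f, hfK, hfne⟩ := hKp (Box n m) ⟨m, rfl⟩
      exact ⟨f, hfK, hfne⟩
    choose φ hφK hφ using hchoice
    obtain ⟨m, m', hne, heq⟩ :=
      Finite.exists_ne_map_eq_of_infinite (fun m : ℕ => (⟨φ m, hφK m⟩ : {f // f ∈ K}))
    have heq' : φ m = φ m' := congrArg Subtype.val heq
    have key : ∀ a b : ℕ, a < b → φ a = φ b → False := by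
      intro a b hab hfeq
      obtain ⟨I, cf, hIcard, hfdef⟩ := hKflat (φ a) (hφK a)
      have hIne : I.Nonempty := Finset.card_pos.mp (by rw [hIcard]; omega)
      obtain ⟨i0, hi0⟩ := hIne
      obtain ⟨x, hxB, hxf⟩ := hφ a
      obtain ⟨y, hyB, hyf⟩ := hφ b
      rw [hfdef] at hxf
      rw [← hfeq, hfdef] at hyf
      have hx0 := hxB i0
      have hy0 := hyB i0
      have hxe : x i0 = cf i0 := hxf i0 hi0
      have hye : y i0 = cf i0 := hyf i0 hi0
      have hmono := hcmono n a b hab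
      have hp := hcpos n a
      simp only [mem_Icc] at hx0 hy0
      linarith [hx0.2, hy0.1]
    rcases lt_or_gt_of_ne hne with h | h
    · exact key m m' h heq'
    · exact key m' m h heq'.symm
  · intro B hB
    have hB' : ∀ n, ∃ mm, Box n mm = B n := hB
    choose m hm using hB'
    set c0 : ℝ := c 0 (m 0) with hc0
    have hc0pos : 0 < c0 := hcpos 0 (m 0)
    set lo : Fin d → ℝ := fun i => q 0 i - c0 + c0/4 with hlo
    set hi : Fin d → ℝ := fun i => q 0 i - c0/2 with hhi
    have hlohi : ∀ i, lo i < hi i := fun i => by rw [hlo, hhi]; dsimp; linarith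
    obtain ⟨N, hN⟩ := exists_pow_lt_of_lt_one (show (0:ℝ) < c0/4 by linarith)
      (show (1/2:ℝ) < 1 by norm_num)
    -- the set of rational points in the open target box
    set T : Set (Fin d → ℚ) := {r | ∀ i, (r i : ℝ) ∈ Ioo (lo i) (hi i)} with hT
    have hTinf : T.Infinite := by
      have hbase : ∀ i, ∃ r : ℚ, lo i < (r:ℝ) ∧ (r:ℝ) < hi i := fun i =>
        exists_rat_btwn (hlohi i)
      choose base hbase1 hbase2 using hbase
      set z : Fin d := ⟨0, hd⟩ with hz
      obtain ⟨r1, hr11, hr12⟩ := exists_rat_btwn (hlohi z)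
      obtain ⟨r2, hr21, hr22⟩ := exists_rat_btwn hr12
      have hr1r2 : r1 < r2 := by exact_mod_cast hr21
      have hS0 : (Set.Ioo r1 r2).Infinite := Set.Ioo_infinite hr1r2
      have himg : (fun s => Function.update base z s) '' (Set.Ioo r1 r2) ⊆ T := by
        rintro _ ⟨s, hs, rfl⟩
        intro i
        dsimp only
        rcases eq_or_ne i z with rfl | hiz
        · rw [Function.update_self]
          constructor
          · exact hr11.trans (by exact_mod_cast hs.1)
          · exact lt_trans (by exact_mod_cast hs.2) hr22
        · rw [Function.update_of_ne hiz]
          exact ⟨hbase1 i, hbase2 i⟩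
      have hinj : Set.InjOn (fun s => Function.update base z s) (Set.Ioo r1 r2) := by
        intro s _ s' _ hss
        have := congrFun hss z
        simpa using this
      exact ((hS0.image hinj).mono himg)
    have hSinf : (e ⁻¹' T).Infinite := hTinf.preimage (by rw [he.range_eq]; exact subset_univ _)
    obtain ⟨j, hjT, hjN⟩ := hSinf.exists_gt N
    have hj0 : (0:ℕ) ≠ j := by omega
    have hsmall : c j (m j) < c0/4 := by
      have h1 : c j (m j) ≤ (1/2:ℝ)^j :=
        pow_le_pow_of_le_one (by norm_num) (by norm_num) (by omega)
      have h2 : (1/2:ℝ)^j ≤ (1/2:ℝ)^N :=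
        pow_le_pow_of_le_one (by norm_num) (by norm_num) (by omega)
      linarith
    have hsub : Box j (m j) ⊆ Box 0 (m 0) := by
      intro x hx i
      have hxi := hx i
      simp only [mem_Icc] at hxi ⊢
      have hqj := hjT i
      simp only [mem_Ioo] at hqj
      have hcj := hcpos j (m j)
      rw [hlo] at hqj; rw [hhi] at hqj
      dsimp at hqj
      constructor
      · linarith [hxi.1, hqj.1]
      · linarith [hxi.2, hqj.2]
    set x : Fin d → ℝ := fun i => q j i - c j (m j) with hx
    have hxj : x ∈ Box j (m j) := hcorner j (m j)
    have hx0 : x ∈ Box 0 (m 0) := hsub hxj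
    obtain ⟨I, hIsub, hIcard⟩ :=
      Finset.exists_subset_card_eq (s := (Finset.univ : Finset (Fin d))) (n := d - k)
        (by rw [Finset.card_univ, Fintype.card_fin]; omega)
    refine ⟨0, j, hj0, {y | ∀ i ∈ I, y i = x i}, ⟨I, x, hIcard, rfl⟩, ?_, ?_⟩
    · exact ⟨x, fun i _ => rfl, by rw [← hm 0]; exact hx0⟩
    · exact ⟨x, fun i _ => rfl, by rw [← hm j]; exact hxj⟩
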